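/- Let m ≥ 1 and define the m×m real matrix a as follows: for 1 ≤ j ≤ m−1, a_{jk} = 0 if j − k is even and a_{jk} = (−1)^{(j−k−1)/2}/(j−k) if j − k is odd; for the last row, a_{mk} = 0 if k is even and a_{mk} = (−1)^{(k−1)/2}/k if k is odd. Then −(2^{m−1}/π^m) det_m(a) = ((−1)^m/2) · ∏_{k=1}^{⌊m/2⌋} Γ(k)²/( Γ(k−1/2) Γ(k+1/2) ) · ∏_{k=1}^{⌊(m+1)/2⌋} Γ(k)²/( Γ(k−1/2) Γ(k+1/2) ), where Γ is the Euler Gamma function and ⌊·⌋ denotes the integer part. -/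

import Mathlib

open Finset Matrix Real

noncomputable def rr (n : ℕ) : ℝ :=
  ∏ t ∈ Finset.range n, ((2*(t:ℝ)+2)^2 / ((2*(t:ℝ)+1)*(2*(t:ℝ)+3)))

noncomputable def gg (n : ℕ) : ℝ := ∏ j ∈ Finset.range n, rr j

noncomputable def Gp (n : ℕ) : Matrix (Fin n) (Fin n) ℝ :=
  fun a b => (2*(b:ℝ) - 2*(a:ℝ) + 1)⁻¹

noncomputable def dl (n : ℕ) (a : Fin (n+1)) : ℝ :=
  if a = Fin.last n then 1 else (2*(n:ℝ)+1-2*(a:ℝ))/(2*(a:ℝ)-2*(n:ℝ))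

noncomputable def ee1 (n : ℕ) (a : Fin (n+1)) : ℝ :=
  if a = Fin.last n then 0 else -1/(2*(a:ℝ)-2*(n:ℝ))

noncomputable def du (n : ℕ) (b : Fin (n+1)) : ℝ :=
  if b = Fin.last n then 1 else (2*(b:ℝ)+1-2*(n:ℝ))/(2*(n:ℝ)-2*(b:ℝ))

noncomputable def ee2 (n : ℕ) (b : Fin (n+1)) : ℝ :=
  if b = Fin.last n then 0 else -((2*(b:ℝ)+1-2*(n:ℝ))/(2*(n:ℝ)-2*(b:ℝ)))

noncomputable def Lmat (n : ℕ) : Matrix (Fin (n+1)) (Fin (n+1)) ℝ :=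
  fun a c => (if c = a then dl n a else 0) + (if c = Fin.last n then ee1 n a else 0)

noncomputable def Umat (n : ℕ) : Matrix (Fin (n+1)) (Fin (n+1)) ℝ :=
  fun d b => (if d = b then du n b else 0) + (if d = Fin.last n then ee2 n b else 0)

noncomputable def Bmat (n : ℕ) : Matrix (Fin (n+1)) (Fin (n+1)) ℝ :=
  fun a b => if b = Fin.last n then (if a = Fin.last n then 1 else 0)
    else if a = Fin.last n then 1 else (2*(b:ℝ) - 2*(a:ℝ) + 1)⁻¹

lemma odd_ne (a b : ℕ) : (2*(b:ℝ) - 2*(a:ℝ) + 1) ≠ 0 := by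
  have h : ((2*(b:ℤ) - 2*(a:ℤ) + 1 : ℤ) : ℝ) = 2*(b:ℝ) - 2*(a:ℝ) + 1 := by push_cast; ring
  rw [← h]
  exact_mod_cast (by omega : (2*(b:ℤ) - 2*(a:ℤ) + 1) ≠ 0)

lemma val_lt {n : ℕ} {a : Fin (n+1)} (ha : a ≠ Fin.last n) : (a:ℕ) < n := by
  have h1 := a.is_lt
  have h2 : (a:ℕ) ≠ n := fun h => ha (Fin.ext (by simp [h]))
  omega

lemma hane {n : ℕ} {a : Fin (n+1)} (ha : a ≠ Fin.last n) : (2*(a:ℝ)-2*(n:ℝ)) ≠ 0 := by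
  have : ((a:ℕ):ℝ) < (n:ℝ) := by exact_mod_cast val_lt ha
  intro h; nlinarith

lemma hbne {n : ℕ} {b : Fin (n+1)} (hb : b ≠ Fin.last n) : (2*(n:ℝ)-2*(b:ℝ)) ≠ 0 := by
  have h := hane hb; intro h2; apply h; linarith

lemma key_prod (n : ℕ) : Lmat n * Gp (n+1) * Umat n = Bmat n := by
  ext a b
  have hmul1 : ∀ d : Fin (n+1), (Lmat n * Gp (n+1)) a d
      = dl n a * Gp (n+1) a d + ee1 n a * Gp (n+1) (Fin.last n) d := by
    intro d
    simp only [Matrix.mul_apply, Lmat, add_mul, Finset.sum_add_distrib, ite_mul, zero_mul]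
    rw [Finset.sum_ite_eq' Finset.univ a _, Finset.sum_ite_eq' Finset.univ (Fin.last n) _]
    simp
  have hmul2 : (Lmat n * Gp (n+1) * Umat n) a b
      = (Lmat n * Gp (n+1)) a b * du n b + (Lmat n * Gp (n+1)) a (Fin.last n) * ee2 n b := by
    simp only [Matrix.mul_apply, Umat, mul_add, Finset.sum_add_distrib, mul_ite, mul_zero]
    rw [Finset.sum_ite_eq' Finset.univ b _, Finset.sum_ite_eq' Finset.univ (Fin.last n) _]
    simp
  rw [hmul2, hmul1, hmul1]
  have hlast : ((Fin.last n : Fin (n+1)) : ℕ) = n := rfl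
  rcases eq_or_ne a (Fin.last n) with ha | ha <;> rcases eq_or_ne b (Fin.last n) with hb | hb
  · subst ha; subst hb
    simp only [Bmat, dl, du, ee1, ee2, Gp, if_pos rfl, hlast]
    norm_num
  · subst ha
    simp only [Bmat, dl, du, ee1, ee2, Gp, if_pos rfl, if_neg hb, hlast, ↓reduceIte]
    have h2 := hbne hb
    have h3 := odd_ne n (b:ℕ)
    have h4 := odd_ne n (b:ℕ)
    have h6 : 2*(((b:ℕ):ℝ) - n) + 1 ≠ 0 := by intro h; apply h3; linarith
    have h7 : (n:ℝ) - ((b:ℕ):ℝ) ≠ 0 := by intro h; apply h2; linarith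
    field_simp
    ring
  · subst hb
    simp only [Bmat, dl, du, ee1, ee2, Gp, if_pos rfl, if_neg ha, hlast, ↓reduceIte]
    have h1 := hane ha
    have h3 := odd_ne (a:ℕ) n
    have h6 : 2*((n:ℝ) - ((a:ℕ):ℝ)) + 1 ≠ 0 := by intro h; apply h3; linarith
    have h7 : ((a:ℕ):ℝ) - (n:ℝ) ≠ 0 := by intro h; apply h1; linarith
    field_simp
    ring
  · simp only [Bmat, dl, du, ee1, ee2, Gp, if_neg ha, if_neg hb, hlast]
    have h1 := hane ha
    have h2 := hbne hb
    have h3 := odd_ne (a:ℕ) (b:ℕ)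
    have h4 := odd_ne (a:ℕ) n
    have h5 := odd_ne n (b:ℕ)
    have h6 : 2*(((b:ℕ):ℝ) - n) + 1 ≠ 0 := by intro h; apply h5; linarith
    have h7 : (n:ℝ) - ((b:ℕ):ℝ) ≠ 0 := by intro h; apply h2; linarith
    have h8 : 2*((n:ℝ) - ((a:ℕ):ℝ)) + 1 ≠ 0 := by intro h; apply h4; linarith
    have h9 : ((a:ℕ):ℝ) - (n:ℝ) ≠ 0 := by intro h; apply h1; linarith
    have h10 : 2*(((b:ℕ):ℝ) - ((a:ℕ):ℝ)) + 1 ≠ 0 := by intro h; apply h3; linarith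
    field_simp
    ring

lemma det_Lmat (n : ℕ) : (Lmat n).det = ∏ a : Fin (n+1), dl n a := by
  have ht : (Lmat n).BlockTriangular id := by
    intro i j hij
    have hij' : (j:Fin (n+1)) < i := hij
    have h1 : j ≠ i := ne_of_lt hij'
    have h2 : j ≠ Fin.last n := by
      intro h; subst h; exact absurd (Fin.le_last i) (not_le.2 hij')
    simp only [Lmat, if_neg h1, if_neg h2]; ring
  rw [Matrix.det_of_upperTriangular ht]
  apply Finset.prod_congr rfl
  intro a _
  simp only [Lmat, if_pos rfl]
  rcases eq_or_ne a (Fin.last n) with h | h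
  · subst h; simp [dl, ee1]
  · simp [if_neg h]

lemma det_Umat (n : ℕ) : (Umat n).det = ∏ b : Fin (n+1), du n b := by
  have ht : (Umat n).BlockTriangular OrderDual.toDual := by
    intro i j hij
    have hij' : i < j := hij
    have h1 : i ≠ j := ne_of_lt hij'
    have h2 : i ≠ Fin.last n := by
      intro h; subst h; exact absurd (Fin.le_last j) (not_le.2 hij')
    simp only [Umat, if_neg h1, if_neg h2]; ring
  rw [Matrix.det_of_lowerTriangular _ ht]
  apply Finset.prod_congr rfl
  intro b _
  simp only [Umat, if_pos rfl]
  rcases eq_or_ne b (Fin.last n) with h | h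
  · subst h; simp [du, ee2]
  · simp [if_neg h]

lemma castAdd_ne_last {n : ℕ} (a : Fin n) : (Fin.castAdd 1 a : Fin (n+1)) ≠ Fin.last n := by
  apply Fin.ne_of_val_ne
  simp only [Fin.coe_castAdd, Fin.val_last]
  exact Nat.ne_of_lt a.is_lt

lemma natAdd_eq_last {n : ℕ} (b : Fin 1) : (Fin.natAdd n b : Fin (n+1)) = Fin.last n := by
  apply Fin.ext
  simp only [Fin.coe_natAdd, Fin.val_last, Fin.fin_one_eq_zero b, Fin.val_zero, Nat.add_zero]

lemma det_Bmat (n : ℕ) : (Bmat n).det = (Gp n).det := by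
  have h : (Bmat n).submatrix finSumFinEquiv finSumFinEquiv
      = Matrix.fromBlocks (Gp n) 0 (fun _ _ => (1:ℝ)) 1 := by
    ext z w
    rcases z with a | a <;> rcases w with b | b <;>
      simp only [Matrix.submatrix_apply, finSumFinEquiv_apply_left, finSumFinEquiv_apply_right,
        Matrix.fromBlocks_apply₁₁, Matrix.fromBlocks_apply₁₂, Matrix.fromBlocks_apply₂₁,
        Matrix.fromBlocks_apply₂₂]
    · simp only [Bmat, if_neg (castAdd_ne_last a), if_neg (castAdd_ne_last b), Gp,
        Fin.coe_castAdd]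
      rfl
    · simp only [Bmat, natAdd_eq_last b, if_pos rfl, if_neg (castAdd_ne_last a),
        Matrix.zero_apply]
      simp
      rfl
    · simp only [Bmat, natAdd_eq_last a, if_pos rfl, if_neg (castAdd_ne_last b)]
      simp
      rfl
    · simp only [Bmat, natAdd_eq_last a, natAdd_eq_last b, if_pos rfl]
      rw [Fin.fin_one_eq_zero a, Fin.fin_one_eq_zero b]
      simp [Matrix.one_apply]
      rfl
  calc (Bmat n).det = ((Bmat n).submatrix finSumFinEquiv finSumFinEquiv).det :=
        (Matrix.det_submatrix_equiv_self _ _).symm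
    _ = (Matrix.fromBlocks (Gp n) 0 (fun _ _ => (1:ℝ)) 1).det := by rw [h]
    _ = (Gp n).det * (1 : Matrix (Fin 1) (Fin 1) ℝ).det := Matrix.det_fromBlocks_zero₁₂ _ _ _
    _ = (Gp n).det := by simp

lemma rr_pos (n : ℕ) : 0 < rr n := by
  apply Finset.prod_pos
  intro t _
  have h1 : (0:ℝ) < 2*(t:ℝ)+1 := by positivity
  have h2 : (0:ℝ) < 2*(t:ℝ)+3 := by positivity
  positivity

lemma gg_pos (n : ℕ) : 0 < gg n := Finset.prod_pos fun j _ => rr_pos j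

lemma prod_dldu (n : ℕ) :
    (∏ a : Fin (n+1), dl n a) * (∏ b : Fin (n+1), du n b) = (rr n)⁻¹ := by
  rw [Fin.prod_univ_castSucc (f := dl n), Fin.prod_univ_castSucc (f := du n)]
  have hdll : dl n (Fin.last n) = 1 := by simp [dl]
  have hdul : du n (Fin.last n) = 1 := by simp [du]
  rw [hdll, hdul, mul_one, mul_one, ← Finset.prod_mul_distrib]
  have hcs : ∀ a : Fin n, (Fin.castSucc a) ≠ Fin.last n := by
    intro a h; have := congrArg Fin.val h; simp [Fin.last] at this; omega
  have step : ∀ a : Fin n, dl n (Fin.castSucc a) * du n (Fin.castSucc a)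
      = ((2*(n:ℝ)-2*(a:ℝ))^2 - 1) / (2*(n:ℝ)-2*(a:ℝ))^2 := by
    intro a
    have hlt : ((a:ℕ):ℝ) < (n:ℝ) := by exact_mod_cast a.is_lt
    have h1 : (2*((a:ℕ):ℝ) - 2*(n:ℝ)) ≠ 0 := by intro h; nlinarith
    have h1' : (2*(n:ℝ) - 2*((a:ℕ):ℝ)) ≠ 0 := by intro h; apply h1; linarith
    simp only [dl, du, if_neg (hcs a), Fin.coe_castSucc]
    rw [div_mul_div_comm, div_eq_div_iff (mul_ne_zero h1 h1') (pow_ne_zero 2 h1')]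
    ring
  rw [Finset.prod_congr rfl (fun a _ => step a)]
  rw [rr, ← Finset.prod_inv_distrib]
  rw [Fin.prod_univ_eq_prod_range (fun a => ((2*(n:ℝ)-2*(a:ℝ))^2 - 1) / (2*(n:ℝ)-2*(a:ℝ))^2)]
  rw [← Finset.prod_range_reflect]
  apply Finset.prod_congr rfl
  intro j hj
  have hj' : j < n := Finset.mem_range.1 hj
  have hc : ((n - 1 - j : ℕ) : ℝ) = (n:ℝ) - 1 - (j:ℝ) := by
    have : n - 1 - j = n - (1 + j) := by omega
    rw [this, Nat.cast_sub (by omega)]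
    push_cast; ring
  rw [hc]
  have e1 : (2*(n:ℝ) - 2*((n:ℝ)-1-(j:ℝ))) = 2*(j:ℝ)+2 := by ring
  rw [e1, inv_div, show (2*(j:ℝ)+2)^2 - 1 = (2*(j:ℝ)+1)*(2*(j:ℝ)+3) from by ring]

lemma det_Gp (n : ℕ) : (Gp n).det = gg n := by
  induction n with
  | zero => simp [Gp, gg, Matrix.det_fin_zero]
  | succ n ih =>
    have h := congrArg Matrix.det (key_prod n)
    rw [Matrix.det_mul, Matrix.det_mul, det_Bmat, det_Lmat, det_Umat, ih] at h
    have hr : rr n ≠ 0 := ne_of_gt (rr_pos n)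
    have hdd : (∏ a : Fin (n+1), dl n a) * (∏ b : Fin (n+1), du n b) = (rr n)⁻¹ := prod_dldu n
    have : (Gp (n+1)).det * (rr n)⁻¹ = gg n := by
      calc (Gp (n+1)).det * (rr n)⁻¹
          = (∏ a : Fin (n+1), dl n a) * (Gp (n+1)).det * (∏ b : Fin (n+1), du n b) := by
            rw [← hdd]; ring
        _ = gg n := h
    have hgg : gg (n+1) = gg n * rr n := Finset.prod_range_succ _ _
    rw [hgg, ← this]
    field_simp

noncomputable def Gf (n : ℕ) : Matrix (Fin n) (Fin n) ℝ :=
  fun a b => (-1:ℝ)^((a:ℕ)+(b:ℕ)) * (2*(b:ℝ) - 2*(a:ℝ) + 1)⁻¹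

lemma det_Gf (n : ℕ) : (Gf n).det = gg n := by
  have h : Gf n = Matrix.diagonal (fun a : Fin n => (-1:ℝ)^(a:ℕ)) * Gp n
      * Matrix.diagonal (fun b : Fin n => (-1:ℝ)^(b:ℕ)) := by
    ext a b
    rw [Matrix.mul_diagonal, Matrix.diagonal_mul]
    simp only [Gf, Gp, pow_add]
    ring
  rw [h, Matrix.det_mul, Matrix.det_mul, Matrix.det_diagonal, det_Gp]
  have hP : (∏ a : Fin n, ((-1:ℝ))^(a:ℕ)) * (∏ a : Fin n, ((-1:ℝ))^(a:ℕ)) = 1 := by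
    rw [← Finset.prod_mul_distrib]
    have : ∀ a : Fin n, (-1:ℝ)^(a:ℕ) * (-1:ℝ)^(a:ℕ) = 1 := by
      intro a; rw [← pow_add, ← two_mul]; exact Even.neg_one_pow ⟨(a:ℕ), two_mul _⟩
    rw [Finset.prod_congr rfl (fun a _ => this a)]
    simp
  calc (∏ a : Fin n, ((-1:ℝ))^(a:ℕ)) * gg n * (∏ a : Fin n, ((-1:ℝ))^(a:ℕ))
      = ((∏ a : Fin n, ((-1:ℝ))^(a:ℕ)) * (∏ a : Fin n, ((-1:ℝ))^(a:ℕ))) * gg n := by ring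
    _ = gg n := by rw [hP, one_mul]

lemma Gamma_ratio (n : ℕ) :
    Real.Gamma ((n:ℝ)+1)^2 / (Real.Gamma ((n:ℝ)+1/2) * Real.Gamma ((n:ℝ)+3/2))
      = 2/π * rr n := by
  induction n with
  | zero =>
    simp only [Nat.cast_zero, zero_add, rr, Finset.range_zero, Finset.prod_empty, mul_one]
    rw [Real.Gamma_one, show (3:ℝ)/2 = 1/2 + 1 from by norm_num,
        Real.Gamma_add_one (by norm_num), Real.Gamma_one_half_eq]
    rw [show √π * ((1:ℝ)/2 * √π) = 1/2 * (√π * √π) from by ring,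
        Real.mul_self_sqrt Real.pi_pos.le]
    field_simp
  | succ n ih =>
    have hπ := Real.pi_pos
    have hG1 : Real.Gamma ((n:ℝ)+1) > 0 := Real.Gamma_pos_of_pos (by positivity)
    have hG2 : Real.Gamma ((n:ℝ)+1/2) > 0 := Real.Gamma_pos_of_pos (by positivity)
    have hG3 : Real.Gamma ((n:ℝ)+3/2) > 0 := Real.Gamma_pos_of_pos (by positivity)
    have e1 : Real.Gamma (((n:ℕ)+1:ℕ):ℝ) = Real.Gamma ((n:ℝ)+1) := by push_cast; ring_nf
    have h1 : Real.Gamma (((n+1:ℕ)):ℝ) = Real.Gamma ((n:ℝ)+1) := by push_cast; ring_nf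
    have h2 : Real.Gamma (((n+1:ℕ):ℝ)+1) = ((n:ℝ)+1) * Real.Gamma ((n:ℝ)+1) := by
      push_cast
      rw [Real.Gamma_add_one (by positivity)]
    have h3 : Real.Gamma (((n+1:ℕ):ℝ)+1/2) = ((n:ℝ)+1/2) * Real.Gamma ((n:ℝ)+1/2) := by
      push_cast
      rw [show (n:ℝ)+1+1/2 = ((n:ℝ)+1/2)+1 from by ring, Real.Gamma_add_one (by positivity)]
    have h4 : Real.Gamma (((n+1:ℕ):ℝ)+3/2) = ((n:ℝ)+3/2) * Real.Gamma ((n:ℝ)+3/2) := by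
      push_cast
      rw [show (n:ℝ)+1+3/2 = ((n:ℝ)+3/2)+1 from by ring, Real.Gamma_add_one (by positivity)]
    have hrr : rr (n+1) = rr n * ((2*(n:ℝ)+2)^2 / ((2*(n:ℝ)+1)*(2*(n:ℝ)+3))) := by
      rw [rr, Finset.prod_range_succ]; rfl
    have hGamma : Real.Gamma ((n:ℝ)+1)^2
        = 2/π * rr n * (Real.Gamma ((n:ℝ)+1/2) * Real.Gamma ((n:ℝ)+3/2)) := by
      rw [← ih]; field_simp
    rw [h2, h3, h4, hrr, mul_pow, hGamma]
    have hne1 : ((n:ℝ)+1/2) ≠ 0 := by positivity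
    have hne2 : ((n:ℝ)+3/2) ≠ 0 := by positivity
    have hne3 : (2*(n:ℝ)+1) ≠ 0 := by positivity
    have hne4 : (2*(n:ℝ)+3) ≠ 0 := by positivity
    field_simp

lemma Gamma_prod (n : ℕ) :
    (∏ k ∈ Finset.Icc 1 n, Real.Gamma (k:ℝ)^2 /
      (Real.Gamma ((k:ℝ) - 1/2) * Real.Gamma ((k:ℝ) + 1/2)))
    = (2/π)^n * gg n := by
  induction n with
  | zero => simp [gg]
  | succ n ih =>
    rw [Finset.prod_Icc_succ_top (by omega), ih]
    have e1 : ((n+1:ℕ):ℝ) = (n:ℝ)+1 := by push_cast; ring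
    rw [e1, show (n:ℝ)+1-1/2 = (n:ℝ)+1/2 from by ring,
        show (n:ℝ)+1+1/2 = (n:ℝ)+3/2 from by ring]
    have hterm := Gamma_ratio n
    have hgg : gg (n+1) = gg n * rr n := Finset.prod_range_succ _ _
    rw [hterm, hgg, pow_succ]
    ring

lemma rot_symm_val (m' : ℕ) (j : Fin (m'+1)) :
    (((finRotate (m'+1)).symm j : Fin (m'+1)) : ℕ)
      = if (j:ℕ) = 0 then m' else (j:ℕ) - 1 := by
  have h1 : (finRotate (m'+1)) (j - 1) = j := by
    rw [finRotate_succ_apply]; exact sub_add_cancel j 1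
  have h2 : (finRotate (m'+1)).symm j = j - 1 := (Equiv.symm_apply_eq _).mpr h1.symm
  rw [h2, Fin.coe_sub]
  rcases Nat.eq_zero_or_pos m' with hm | hm
  · subst hm
    have hj : (j:ℕ) = 0 := by omega
    rw [hj, if_pos rfl]
    norm_num
  · have hone : ((1 : Fin (m'+1)) : ℕ) = 1 % (m'+1) := rfl
    have h1m : (1:ℕ) % (m'+1) = 1 := Nat.mod_eq_of_lt (by omega)
    rw [hone, h1m]
    rcases Nat.eq_zero_or_pos (j:ℕ) with hj | hj
    · rw [hj, if_pos rfl, show m'+1-1+0 = m' from by omega, Nat.mod_eq_of_lt (by omega)]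
    · rw [if_neg (by omega), show m'+1-1+(j:ℕ) = ((j:ℕ)-1)+(m'+1) from by omega,
        Nat.add_mod_right, Nat.mod_eq_of_lt (by omega)]

lemma entry_eq (u v : ℕ) :
    (-1:ℝ)^((u:ℤ)-(v:ℤ)-1) / (((2*(u:ℤ)-2*(v:ℤ)-1) : ℤ):ℝ)
      = (-1:ℝ)^(u+v) * (2*(v:ℝ) - 2*(u:ℝ) + 1)⁻¹ := by
  have hden : (((2*(u:ℤ)-2*(v:ℤ)-1) : ℤ):ℝ) = 2*(u:ℝ)-2*(v:ℝ)-1 := by push_cast; ring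
  rw [hden]
  have hneg : (2*(v:ℝ) - 2*(u:ℝ) + 1) = -(2*(u:ℝ)-2*(v:ℝ)-1) := by ring
  rcases Int.even_or_odd ((u:ℤ)-(v:ℤ)-1) with he | ho
  · rw [Even.neg_one_zpow he]
    have hodd : Odd (u+v) := by
      rw [Int.even_iff] at he
      rw [Nat.odd_iff]
      omega
    rw [Odd.neg_one_pow hodd, hneg, inv_neg]
    ring
  · rw [Odd.neg_one_zpow ho]
    have heven : Even (u+v) := by
      rw [Int.odd_iff] at ho
      rw [Nat.even_iff]
      omega
    rw [Even.neg_one_pow heven, hneg, inv_neg]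
    ring

/-- Exact evaluation of the zero-field XX-chain correlation function `⟨σ₁⁺σ_{m+1}⁻⟩`:
`-(2^{m-1}/π^m) det_m(a)` equals a finite product of Gamma functions
(rows and columns of `a` are 1-indexed). -/
theorem stmt14 (m : ℕ) (hm : 1 ≤ m) (A : Matrix (Fin m) (Fin m) ℝ)
    (hA : ∀ j k : Fin m, A j k =
      if (j : ℕ) + 1 < m then
        (if Even ((j : ℤ) - (k : ℤ)) then 0
          else (-1 : ℝ) ^ (((j : ℤ) - (k : ℤ) - 1) / 2) / ((((j : ℤ) - (k : ℤ)) : ℤ) : ℝ))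
      else
        (if Even ((k : ℕ) + 1) then 0
          else (-1 : ℝ) ^ (((k : ℕ) : ℕ) / 2) / (((k : ℕ) + 1 : ℕ) : ℝ))) :
    -((2 : ℝ) ^ (m - 1) / π ^ m) * A.det =
      ((-1 : ℝ) ^ m / 2) *
        (∏ k ∈ Finset.Icc 1 (m / 2), Real.Gamma (k : ℝ) ^ 2 /
            (Real.Gamma ((k : ℝ) - 1 / 2) * Real.Gamma ((k : ℝ) + 1 / 2))) *
        ∏ k ∈ Finset.Icc 1 ((m + 1) / 2), Real.Gamma (k : ℝ) ^ 2 /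
            (Real.Gamma ((k : ℝ) - 1 / 2) * Real.Gamma ((k : ℝ) + 1 / 2)) := by
  obtain ⟨m', rfl⟩ : ∃ m', m = m'+1 := ⟨m-1, by omega⟩
  set n1 := (m'+1+1)/2 with hn1
  set n2 := (m'+1)/2 with hn2
  -- the interleaving equivalence
  have hin1 : ∀ a : Fin n1, 2*(a:ℕ) < m'+1 := by intro a; have := a.is_lt; omega
  have hin2 : ∀ a : Fin n2, 2*(a:ℕ)+1 < m'+1 := by intro a; have := a.is_lt; omega
  have hbij : Function.Bijective (Sum.elim
      (fun a : Fin n1 => (⟨2*(a:ℕ), hin1 a⟩ : Fin (m'+1)))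
      (fun a : Fin n2 => (⟨2*(a:ℕ)+1, hin2 a⟩ : Fin (m'+1)))) := by
    constructor
    · rintro (a|a) (b|b) h <;> simp only [Sum.elim_inl, Sum.elim_inr, Fin.mk.injEq] at h
      · exact congrArg Sum.inl (Fin.ext (by omega))
      · exact absurd h (by omega)
      · exact absurd h (by omega)
      · exact congrArg Sum.inr (Fin.ext (by omega))
    · intro i
      rcases Nat.even_or_odd (i:ℕ) with ⟨t, ht⟩ | ⟨t, ht⟩
      · exact ⟨Sum.inl ⟨t, by have := i.is_lt; omega⟩,
          Fin.ext (by simp only [Sum.elim_inl]; omega)⟩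
      · exact ⟨Sum.inr ⟨t, by have := i.is_lt; omega⟩,
          Fin.ext (by simp only [Sum.elim_inr]; omega)⟩
  let σe : Fin n1 ⊕ Fin n2 ≃ Fin (m'+1) := Equiv.ofBijective _ hbij
  have hσl : ∀ a : Fin n1, ((σe (Sum.inl a) : Fin (m'+1)) : ℕ) = 2*(a:ℕ) := fun a => rfl
  have hσr : ∀ a : Fin n2, ((σe (Sum.inr a) : Fin (m'+1)) : ℕ) = 2*(a:ℕ)+1 := fun a => rfl
  -- the key submatrix identity
  have hsub : ((A.submatrix (⇑(finRotate (m'+1)).symm) id).submatrix ⇑σe ⇑σe)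
      = Matrix.fromBlocks (Gf n1) 0 0 (Gf n2) := by
    ext z w
    simp only [Matrix.submatrix_apply, id]
    rcases z with a | a <;> rcases w with b | b
    · -- row block 1, col block 1
      have hrv := rot_symm_val m' (σe (Sum.inl a))
      rw [hσl] at hrv
      rcases Nat.eq_zero_or_pos (a:ℕ) with ha | ha
      · -- special last row
        have hrv0 : ((((finRotate (m'+1)).symm (σe (Sum.inl a))) : Fin (m'+1)):ℕ) = m' := by
          rw [hrv, ha]; norm_num
        rw [hA]
        rw [if_neg (by rw [hrv0]; omega), if_neg (by rw [hσl]; rintro ⟨t, ht⟩; omega)]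
        simp only [Matrix.fromBlocks_apply₁₁, Gf, hσl]
        rw [show (2*(b:ℕ))/2 = (b:ℕ) from by omega, ha]
        push_cast
        rw [div_eq_mul_inv]
        norm_num
      · rw [hA]
        have hlt : ((((finRotate (m'+1)).symm (σe (Sum.inl a))) : Fin (m'+1)):ℕ) = 2*(a:ℕ)-1 := by
          rw [hrv, if_neg (by omega)]
        have h2a : 2*(a:ℕ) ≤ m' := by have := a.is_lt; omega
        rw [if_pos (by rw [hlt]; omega)]
        have hjint : ((((finRotate (m'+1)).symm (σe (Sum.inl a))) : Fin (m'+1)):ℤ)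
            = 2*((a:ℕ):ℤ)-1 := by
          have : (2*(a:ℕ)-1 : ℕ) = ((2*((a:ℕ):ℤ)-1).toNat) := by omega
          rw [show ((((finRotate (m'+1)).symm (σe (Sum.inl a))) : Fin (m'+1)):ℤ)
            = (((((finRotate (m'+1)).symm (σe (Sum.inl a))) : Fin (m'+1)):ℕ) : ℤ) from rfl, hlt]
          omega
        have hkint : ((σe (Sum.inl b) : Fin (m'+1)) : ℤ) = 2*((b:ℕ):ℤ) := by
          rw [show ((σe (Sum.inl b) : Fin (m'+1)) : ℤ)
            = (((σe (Sum.inl b) : Fin (m'+1)) : ℕ) : ℤ) from rfl, hσl]; push_cast; ring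
        rw [hjint, hkint]
        rw [if_neg (by rw [Int.even_iff]; omega)]
        simp only [Matrix.fromBlocks_apply₁₁, Gf]
        have heq : (2*((a:ℕ):ℤ)-1 - 2*((b:ℕ):ℤ) - 1)/2 = ((a:ℕ):ℤ) - ((b:ℕ):ℤ) - 1 := by omega
        rw [heq, show 2*((a:ℕ):ℤ)-1 - 2*((b:ℕ):ℤ) = 2*((a:ℕ):ℤ) - 2*((b:ℕ):ℤ) - 1 from by ring]
        exact entry_eq (a:ℕ) (b:ℕ)
    · -- row block 1, col block 2 : zero
      have hrv := rot_symm_val m' (σe (Sum.inl a))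
      rw [hσl] at hrv
      rcases Nat.eq_zero_or_pos (a:ℕ) with ha | ha
      · have hrv0 : ((((finRotate (m'+1)).symm (σe (Sum.inl a))) : Fin (m'+1)):ℕ) = m' := by
          rw [hrv, ha]; norm_num
        rw [hA, if_neg (by rw [hrv0]; omega), if_pos (by rw [hσr]; exact ⟨(b:ℕ)+1, by ring⟩)]
        simp
      · rw [hA]
        have hlt : ((((finRotate (m'+1)).symm (σe (Sum.inl a))) : Fin (m'+1)):ℕ) = 2*(a:ℕ)-1 := by
          rw [hrv, if_neg (by omega)]
        rw [if_pos (by rw [hlt]; have := a.is_lt; omega)]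
        have hjint : ((((finRotate (m'+1)).symm (σe (Sum.inl a))) : Fin (m'+1)):ℤ)
            = 2*((a:ℕ):ℤ)-1 := by
          rw [show ((((finRotate (m'+1)).symm (σe (Sum.inl a))) : Fin (m'+1)):ℤ)
            = (((((finRotate (m'+1)).symm (σe (Sum.inl a))) : Fin (m'+1)):ℕ) : ℤ) from rfl, hlt]
          omega
        have hkint : ((σe (Sum.inr b) : Fin (m'+1)) : ℤ) = 2*((b:ℕ):ℤ)+1 := by
          rw [show ((σe (Sum.inr b) : Fin (m'+1)) : ℤ)
            = (((σe (Sum.inr b) : Fin (m'+1)) : ℕ) : ℤ) from rfl, hσr]; push_cast; ring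
        rw [hjint, hkint, if_pos (by rw [Int.even_iff]; omega)]
        simp
    · -- row block 2, col block 1 : zero
      have hrv := rot_symm_val m' (σe (Sum.inr a))
      rw [hσr] at hrv
      have hlt : ((((finRotate (m'+1)).symm (σe (Sum.inr a))) : Fin (m'+1)):ℕ) = 2*(a:ℕ) := by
        rw [hrv, if_neg (by omega)]; omega
      rw [hA, if_pos (by rw [hlt]; have := a.is_lt; omega)]
      have hjint : ((((finRotate (m'+1)).symm (σe (Sum.inr a))) : Fin (m'+1)):ℤ)
          = 2*((a:ℕ):ℤ) := by
        rw [show ((((finRotate (m'+1)).symm (σe (Sum.inr a))) : Fin (m'+1)):ℤ)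
          = (((((finRotate (m'+1)).symm (σe (Sum.inr a))) : Fin (m'+1)):ℕ) : ℤ) from rfl, hlt]
        omega
      have hkint : ((σe (Sum.inl b) : Fin (m'+1)) : ℤ) = 2*((b:ℕ):ℤ) := by
        rw [show ((σe (Sum.inl b) : Fin (m'+1)) : ℤ)
          = (((σe (Sum.inl b) : Fin (m'+1)) : ℕ) : ℤ) from rfl, hσl]; push_cast; ring
      rw [hjint, hkint, if_pos (by rw [Int.even_iff]; omega)]
      simp
    · -- row block 2, col block 2
      have hrv := rot_symm_val m' (σe (Sum.inr a))
      rw [hσr] at hrv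
      have hlt : ((((finRotate (m'+1)).symm (σe (Sum.inr a))) : Fin (m'+1)):ℕ) = 2*(a:ℕ) := by
        rw [hrv, if_neg (by omega)]; omega
      rw [hA, if_pos (by rw [hlt]; have := a.is_lt; omega)]
      have hjint : ((((finRotate (m'+1)).symm (σe (Sum.inr a))) : Fin (m'+1)):ℤ)
          = 2*((a:ℕ):ℤ) := by
        rw [show ((((finRotate (m'+1)).symm (σe (Sum.inr a))) : Fin (m'+1)):ℤ)
          = (((((finRotate (m'+1)).symm (σe (Sum.inr a))) : Fin (m'+1)):ℕ) : ℤ) from rfl, hlt]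
        omega
      have hkint : ((σe (Sum.inr b) : Fin (m'+1)) : ℤ) = 2*((b:ℕ):ℤ)+1 := by
        rw [show ((σe (Sum.inr b) : Fin (m'+1)) : ℤ)
          = (((σe (Sum.inr b) : Fin (m'+1)) : ℕ) : ℤ) from rfl, hσr]; push_cast; ring
      rw [hjint, hkint, if_neg (by rw [Int.even_iff]; omega)]
      simp only [Matrix.fromBlocks_apply₂₂, Gf]
      have heq : (2*((a:ℕ):ℤ) - (2*((b:ℕ):ℤ)+1) - 1)/2 = ((a:ℕ):ℤ) - ((b:ℕ):ℤ) - 1 := by omega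
      rw [heq, show 2*((a:ℕ):ℤ) - (2*((b:ℕ):ℤ)+1) = 2*((a:ℕ):ℤ) - 2*((b:ℕ):ℤ) - 1 from by ring]
      exact entry_eq (a:ℕ) (b:ℕ)
  -- determinant chain
  have hsign : ((Equiv.Perm.sign ((finRotate (m'+1)).symm) : ℤ) : ℝ) = (-1:ℝ)^m' := by
    rw [← Equiv.Perm.inv_def, Equiv.Perm.sign_inv, sign_finRotate]
    push_cast
    ring
  have hchain : gg n1 * gg n2 = (-1:ℝ)^m' * A.det := by
    calc gg n1 * gg n2 = (Gf n1).det * (Gf n2).det := by rw [det_Gf, det_Gf]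
      _ = (Matrix.fromBlocks (Gf n1) 0 0 (Gf n2)).det := (Matrix.det_fromBlocks_zero₂₁ _ _ _).symm
      _ = ((A.submatrix (⇑(finRotate (m'+1)).symm) id).submatrix ⇑σe ⇑σe).det := by rw [hsub]
      _ = (A.submatrix (⇑(finRotate (m'+1)).symm) id).det := Matrix.det_submatrix_equiv_self σe _
      _ = ((Equiv.Perm.sign ((finRotate (m'+1)).symm) : ℤ) : ℝ) * A.det :=
          Matrix.det_permute _ A
      _ = (-1:ℝ)^m' * A.det := by rw [hsign]
  have hdet : A.det = (-1:ℝ)^m' * (gg n1 * gg n2) := by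
    rw [hchain, ← mul_assoc, ← pow_add, ← two_mul]
    rw [Even.neg_one_pow ⟨m', two_mul m'⟩, one_mul]
  -- assemble
  rw [hdet, Gamma_prod, Gamma_prod]
  have hEq : (m'+1)/2 = n2 := rfl
  have hEq2 : (m'+1+1)/2 = n1 := rfl
  have hsum : n2 + n1 = m'+1 := by omega
  have hπ : (π:ℝ) ≠ 0 := ne_of_gt Real.pi_pos
  have hgg1 : gg n1 ≠ 0 := ne_of_gt (gg_pos n1)
  have hgg2 : gg n2 ≠ 0 := ne_of_gt (gg_pos n2)
  rw [show m'+1-1 = m' from by omega]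
  have hp : ((2:ℝ)/π)^n2 * ((2:ℝ)/π)^n1 = 2^(m'+1)/π^(m'+1) := by
    rw [← pow_add, hsum, div_pow]
  field_simp
  rw [mul_assoc (π ^ (m'+1) * (-1:ℝ)^(m'+1)), hp]
  field_simp
  ring
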